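/- arXiv:1610.07320 — 3 statements merged into one kernel-verified Lean document; each statement's English description precedes it below -/
import Mathlib

section
/- Let G=(V,E) be a connected simple graph, X_0 : V → ℤ/3ℤ an initial 3-coloring, and (X_t)_{t≥0} the 3-color GHM trajectory started from X_0. Then for every vertex x ∈ V and every t ≥ 1, the number of excitations ne_t(x) equals the maximum of the path integral ∫_W dX_0 over all walks W in G starting at x with at most t edges. -/
noncomputable section
attribute [local instance] Classical.propDecidable

open Filter

variable {V : Type*}

/-- One step of the 3-color Greenberg–Hastings model: color 0 becomes 1 iff some
neighbor has color 1 (otherwise stays 0); colors 1 and 2 advance by one (mod 3). -/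
def ghmStep (G : SimpleGraph V) (X : V → ZMod 3) : V → ZMod 3 :=
  fun v => if X v = 0 then (if ∃ u, G.Adj v u ∧ X u = 1 then 1 else 0) else X v + 1

/-- The GHM trajectory started from `X₀`. -/
def ghmTraj (G : SimpleGraph V) (X₀ : V → ZMod 3) : ℕ → V → ZMod 3 :=
  fun t => (ghmStep G)^[t] X₀

/-- A vertex is excited at time `t` for GHM iff its color changes from 0 to 1. -/
def ghmExcited (G : SimpleGraph V) (X₀ : V → ZMod 3) (t : ℕ) (v : V) : Prop :=
  ghmTraj G X₀ t v = 0 ∧ ghmTraj G X₀ (t + 1) v = 1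

/-- Number of excitations of `x` at times `0, …, t-1` (GHM). -/
def ghmNe (G : SimpleGraph V) (X₀ : V → ZMod 3) (t : ℕ) (x : V) : ℕ :=
  ((Finset.range t).filter fun s => ghmExcited G X₀ s x).card

/-- The GHM 1-form `dX` on ordered pairs of vertices. -/
def dXghm (X : V → ZMod 3) (u v : V) : ℤ :=
  if X u = 0 ∧ X v = 1 then 1 else if X u = 1 ∧ X v = 0 then -1 else 0

/-- Path integral of the GHM 1-form along a walk. -/
def walkIntGHM {G : SimpleGraph V} (X : V → ZMod 3) {x y : V} (w : G.Walk x y) : ℤ :=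
  (w.darts.map fun d => dXghm X d.toProd.1 d.toProd.2).sum

/-! ### Auxiliary machinery -/

private lemma zmod3_cases (z : ZMod 3) : z = 0 ∨ z = 1 ∨ z = 2 := by revert z; decide

/-- Integer "phase" of a color. -/
private def cph (z : ZMod 3) : ℤ := if z = 0 then 2 else if z = 1 then 0 else 1

private lemma cph0 : cph 0 = 2 := by simp [cph]
private lemma cph1 : cph 1 = 0 := by simp [cph, show (1 : ZMod 3) ≠ 0 by decide]
private lemma cph2 : cph 2 = 1 := by
  simp [cph, show (2 : ZMod 3) ≠ 0 by decide, show (2 : ZMod 3) ≠ 1 by decide]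

/-- The integer height function. -/
private def Aht (G : SimpleGraph V) (X₀ : V → ZMod 3) (t : ℕ) (x : V) : ℤ :=
  3 * ghmNe G X₀ t x + cph (ghmTraj G X₀ t x)

private lemma traj_zero (G : SimpleGraph V) (X₀ : V → ZMod 3) (x : V) :
    ghmTraj G X₀ 0 x = X₀ x := rfl

private lemma traj_succ (G : SimpleGraph V) (X₀ : V → ZMod 3) (t : ℕ) (x : V) :
    ghmTraj G X₀ (t + 1) x = ghmStep G (ghmTraj G X₀ t) x := by
  show ((ghmStep G)^[t + 1] X₀) x = _
  rw [Function.iterate_succ_apply']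
  rfl

private lemma ne_zero' (G : SimpleGraph V) (X₀ : V → ZMod 3) (x : V) :
    ghmNe G X₀ 0 x = 0 := by simp [ghmNe]

private lemma ne_succ (G : SimpleGraph V) (X₀ : V → ZMod 3) (t : ℕ) (x : V) :
    ghmNe G X₀ (t + 1) x = ghmNe G X₀ t x + if ghmExcited G X₀ t x then 1 else 0 := by
  unfold ghmNe
  rw [Finset.range_add_one, Finset.filter_insert]
  split
  · rw [Finset.card_insert_of_notMem (by simp)]
  · simp

private lemma ne_mono (G : SimpleGraph V) (X₀ : V → ZMod 3) {s t : ℕ} (h : s ≤ t) (x : V) :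
    ghmNe G X₀ s x ≤ ghmNe G X₀ t x := by
  apply Finset.card_le_card
  exact Finset.filter_subset_filter _ (Finset.range_subset_range.2 h)

private lemma excited_iff (G : SimpleGraph V) (X₀ : V → ZMod 3) (t : ℕ) (x : V) :
    ghmExcited G X₀ t x ↔
      ghmTraj G X₀ t x = 0 ∧ ∃ u, G.Adj x u ∧ ghmTraj G X₀ t u = 1 := by
  constructor
  · rintro ⟨h0, h1⟩
    refine ⟨h0, ?_⟩
    rw [traj_succ] at h1
    unfold ghmStep at h1
    rw [if_pos h0] at h1
    by_contra hn
    rw [if_neg hn] at h1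
    exact (show (0 : ZMod 3) ≠ 1 by decide) h1
  · rintro ⟨h0, he⟩
    refine ⟨h0, ?_⟩
    rw [traj_succ]
    unfold ghmStep
    rw [if_pos h0, if_pos he]

private lemma traj_succ_of_ne (G : SimpleGraph V) (X₀ : V → ZMod 3) (t : ℕ) (x : V)
    (hx : ghmTraj G X₀ t x ≠ 0) :
    ghmTraj G X₀ (t + 1) x = ghmTraj G X₀ t x + 1 := by
  rw [traj_succ]; unfold ghmStep; rw [if_neg hx]

private lemma traj_succ_of_not_excited (G : SimpleGraph V) (X₀ : V → ZMod 3) (t : ℕ) (x : V)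
    (hx : ghmTraj G X₀ t x = 0) (he : ¬ ghmExcited G X₀ t x) :
    ghmTraj G X₀ (t + 1) x = 0 := by
  by_cases hn : ∃ u, G.Adj x u ∧ ghmTraj G X₀ t u = 1
  · exact absurd ((excited_iff G X₀ t x).2 ⟨hx, hn⟩) he
  · rw [traj_succ]; unfold ghmStep; rw [if_pos hx, if_neg hn]

/-- One-step change of the height function. -/
private lemma aht_succ (G : SimpleGraph V) (X₀ : V → ZMod 3) (t : ℕ) (x : V) :
    Aht G X₀ (t + 1) x = Aht G X₀ t x +
      (if ghmTraj G X₀ t x ≠ 0 ∨ ghmExcited G X₀ t x then 1 else 0) := by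
  by_cases hx : ghmTraj G X₀ t x = 0
  · by_cases he : ghmExcited G X₀ t x
    · rw [if_pos (Or.inr he)]
      unfold Aht
      rw [ne_succ, if_pos he, hx, he.2, cph0, cph1]
      push_cast; ring
    · rw [if_neg (by tauto)]
      unfold Aht
      rw [ne_succ, if_neg he, hx, traj_succ_of_not_excited G X₀ t x hx he, cph0]
      push_cast; ring
  · have he : ¬ ghmExcited G X₀ t x := fun h => hx h.1
    rw [if_pos (Or.inl hx)]
    unfold Aht
    rw [ne_succ, if_neg he, traj_succ_of_ne G X₀ t x hx]
    rcases zmod3_cases (ghmTraj G X₀ t x) with h | h | h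
    · exact absurd h hx
    · rw [h, show (1 : ZMod 3) + 1 = 2 by decide, cph1, cph2]; push_cast; ring
    · rw [h, show (2 : ZMod 3) + 1 = 0 by decide, cph2, cph0]; push_cast; ring

private lemma aht_mono (G : SimpleGraph V) (X₀ : V → ZMod 3) (t : ℕ) (x : V) :
    Aht G X₀ t x ≤ Aht G X₀ (t + 1) x := by
  rw [aht_succ]; split <;> omega

/-- A vertex with a neighbor colored 1 advances. -/
private lemma adv_of_nbr (G : SimpleGraph V) (X₀ : V → ZMod 3) (t : ℕ) {x u : V}
    (hadj : G.Adj x u) (hu : ghmTraj G X₀ t u = 1) :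
    ghmTraj G X₀ t x ≠ 0 ∨ ghmExcited G X₀ t x := by
  by_cases hx : ghmTraj G X₀ t x = 0
  · exact Or.inr ((excited_iff G X₀ t x).2 ⟨hx, u, hadj, hu⟩)
  · exact Or.inl hx

/-- The key edge invariant. -/
private lemma aht_inv (G : SimpleGraph V) (X₀ : V → ZMod 3) :
    ∀ t, ∀ x u : V, G.Adj x u →
      3 * dXghm X₀ x u - 1 + Aht G X₀ t u ≤ Aht G X₀ t x := by
  intro t
  induction t with
  | zero =>
    intro x u _
    unfold Aht dXghm
    rw [ne_zero', ne_zero', traj_zero, traj_zero]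
    rcases zmod3_cases (X₀ x) with h | h | h <;>
      rcases zmod3_cases (X₀ u) with h' | h' | h' <;>
        simp [h, h', cph0, cph1, cph2, show (0 : ZMod 3) ≠ 1 by decide,
          show (1 : ZMod 3) ≠ 0 by decide, show (2 : ZMod 3) ≠ 0 by decide,
          show (2 : ZMod 3) ≠ 1 by decide]
  | succ t ih =>
    intro x u hadj
    have IH := ih x u hadj
    have hx := aht_succ G X₀ t x
    have hu := aht_succ G X₀ t u
    by_cases hax : ghmTraj G X₀ t x ≠ 0 ∨ ghmExcited G X₀ t x
    · rw [if_pos hax] at hx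
      have hu2 : Aht G X₀ (t + 1) u ≤ Aht G X₀ t u + 1 := by rw [hu]; split <;> omega
      omega
    · rw [if_neg hax] at hx
      have hx0 : ghmTraj G X₀ t x = 0 := by tauto
      have hxe : ¬ ghmExcited G X₀ t x := by tauto
      by_cases hau : ghmTraj G X₀ t u ≠ 0 ∨ ghmExcited G X₀ t u
      · rw [if_pos hau] at hu
        by_contra hcon
        have htight : Aht G X₀ t x = 3 * dXghm X₀ x u - 1 + Aht G X₀ t u := by omega
        have hone : ghmTraj G X₀ t u = 1 := by
          unfold Aht at htight
          rw [hx0, cph0] at htight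
          rcases zmod3_cases (ghmTraj G X₀ t u) with h | h | h
          · rw [h, cph0] at htight; omega
          · exact h
          · rw [h, cph2] at htight; omega
        exact hxe ((excited_iff G X₀ t x).2 ⟨hx0, u, hadj, hone⟩)
      · rw [if_neg hau] at hu
        omega

private lemma cph_nonneg (z : ZMod 3) : 0 ≤ cph z := by
  rcases zmod3_cases z with h | h | h <;> rw [h] <;> simp [cph0, cph1, cph2]

private lemma cph_le_two (z : ZMod 3) : cph z ≤ 2 := by
  rcases zmod3_cases z with h | h | h <;> rw [h] <;> simp [cph0, cph1, cph2]

private lemma aht_def (G : SimpleGraph V) (X₀ : V → ZMod 3) (t : ℕ) (x : V) :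
    Aht G X₀ t x = 3 * ghmNe G X₀ t x + cph (ghmTraj G X₀ t x) := rfl

/-- The lower-bound propagation lemma. -/
private lemma lb (G : SimpleGraph V) (X₀ : V → ZMod 3) (t : ℕ) {x u : V} (hadj : G.Adj x u) :
    (ghmNe G X₀ t u : ℤ) + dXghm X₀ x u ≤ (ghmNe G X₀ (t + 1) x : ℤ) := by
  have I1 := aht_inv G X₀ (t + 1) x u hadj
  have hmu := aht_mono G X₀ t u
  rw [aht_def, aht_def] at I1
  rw [aht_def, aht_def] at hmu
  by_cases h2 : ghmTraj G X₀ t u = 1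
  · by_cases h1 : ghmTraj G X₀ (t + 1) x = 0
    · -- the delicate case: use that x advances at time t
      have hadv := adv_of_nbr G X₀ t hadj h2
      have hx := aht_succ G X₀ t x
      rw [if_pos hadv] at hx
      have IHt := aht_inv G X₀ t x u hadj
      rw [aht_def, aht_def] at IHt
      rw [aht_def, aht_def] at hx
      rw [h1, cph0] at hx
      rw [h2, cph1] at IHt
      have hcx := cph_nonneg (ghmTraj G X₀ t x)
      omega
    · have hcx : cph (ghmTraj G X₀ (t + 1) x) ≤ 1 := by
        rcases zmod3_cases (ghmTraj G X₀ (t + 1) x) with h | h | h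
        · exact absurd h h1
        · rw [h, cph1]; omega
        · rw [h, cph2]
      rw [h2, cph1] at hmu
      have hcu := cph_nonneg (ghmTraj G X₀ (t + 1) u)
      omega
  · have hcu : 1 ≤ cph (ghmTraj G X₀ t u) := by
      rcases zmod3_cases (ghmTraj G X₀ t u) with h | h | h
      · rw [h, cph0]; omega
      · exact absurd h h2
      · rw [h, cph2]
    have hcu' := cph_nonneg (ghmTraj G X₀ (t + 1) u)
    have hcx := cph_le_two (ghmTraj G X₀ (t + 1) x)
    omega

private lemma dX_anti (X : V → ZMod 3) (u v : V) : dXghm X v u = - dXghm X u v := by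
  unfold dXghm
  rcases zmod3_cases (X u) with h | h | h <;> rcases zmod3_cases (X v) with h' | h' | h' <;>
    simp [h, h', show (0 : ZMod 3) ≠ 1 by decide, show (1 : ZMod 3) ≠ 0 by decide,
      show (2 : ZMod 3) ≠ 0 by decide, show (2 : ZMod 3) ≠ 1 by decide]

/-- The upper-bound lemma for an excited vertex. -/
private lemma claimB (G : SimpleGraph V) (X₀ : V → ZMod 3) (t : ℕ) (x : V)
    (he : ghmExcited G X₀ t x) :
    ∃ u, G.Adj x u ∧ ghmTraj G X₀ t u = 1 ∧
      (ghmNe G X₀ t x : ℤ) + 1 ≤ (ghmNe G X₀ t u : ℤ) + dXghm X₀ x u := by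
  obtain ⟨hx0, u, hadj, hu1⟩ := (excited_iff G X₀ t x).1 he
  refine ⟨u, hadj, hu1, ?_⟩
  have I := aht_inv G X₀ t u x hadj.symm
  rw [dX_anti, aht_def, aht_def, hx0, hu1, cph0, cph1] at I
  omega

private lemma walkInt_cons {G : SimpleGraph V} (X : V → ZMod 3) {x u y : V}
    (h : G.Adj x u) (w : G.Walk u y) :
    walkIntGHM X (SimpleGraph.Walk.cons h w) = dXghm X x u + walkIntGHM X w := by
  simp [walkIntGHM]

private lemma walkInt_nil {G : SimpleGraph V} (X : V → ZMod 3) {x : V} :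
    walkIntGHM X (SimpleGraph.Walk.nil : G.Walk x x) = 0 := by
  simp [walkIntGHM]

/-- Path integrals are at most the number of excitations. -/
private lemma walk_le (G : SimpleGraph V) (X₀ : V → ZMod 3) :
    ∀ (t : ℕ) {x y : V} (w : G.Walk x y), w.length ≤ t →
      walkIntGHM X₀ w ≤ (ghmNe G X₀ t x : ℤ) := by
  intro t
  induction t with
  | zero =>
    intro x y w hw
    cases w with
    | nil => rw [walkInt_nil]; positivity
    | cons h w => simp at hw
  | succ t ih =>
    intro x y w hw
    cases w with
    | nil => rw [walkInt_nil]; positivity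
    | @cons _ u _ h w' =>
      rw [walkInt_cons]
      have hlen : w'.length ≤ t := by
        simpa [Nat.succ_le_succ_iff] using hw
      have h1 := ih w' hlen
      have h2 := lb G X₀ t h
      omega

/-- The number of excitations is attained by some walk. -/
private lemma exists_walk (G : SimpleGraph V) (X₀ : V → ZMod 3) :
    ∀ (t : ℕ) (x : V), ∃ (y : V) (w : G.Walk x y), w.length ≤ t ∧
      walkIntGHM X₀ w = (ghmNe G X₀ t x : ℤ) := by
  intro t
  induction t with
  | zero =>
    intro x
    exact ⟨x, SimpleGraph.Walk.nil, by simp, by rw [walkInt_nil, ne_zero']; simp⟩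
  | succ t ih =>
    intro x
    by_cases he : ghmExcited G X₀ t x
    · obtain ⟨u, hadj, hu1, hle⟩ := claimB G X₀ t x he
      obtain ⟨y, w, hlen, hint⟩ := ih u
      refine ⟨y, SimpleGraph.Walk.cons hadj w, ?_, ?_⟩
      · simp only [SimpleGraph.Walk.length_cons]; omega
      · rw [walkInt_cons, hint]
        have h1 := lb G X₀ t hadj
        have h2 : ghmNe G X₀ (t + 1) x = ghmNe G X₀ t x + 1 := by
          rw [ne_succ, if_pos he]
        omega
    · obtain ⟨y, w, hlen, hint⟩ := ih x
      have h2 : ghmNe G X₀ (t + 1) x = ghmNe G X₀ t x := by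
        rw [ne_succ, if_neg he]; omega
      exact ⟨y, w, le_trans hlen (Nat.le_succ t), by rw [hint, h2]⟩

/-- Key lemma for GHM: the number of excitations of `x` in the first `t` steps is the
maximum of the path integral of `dX₀` over all walks starting at `x` of length at most `t`. -/
theorem ghm_excitations_eq_max_walk_integral (G : SimpleGraph V)
    (hlf : ∀ v : V, (G.neighborSet v).Finite) (hconn : G.Connected)
    (X₀ : V → ZMod 3) (x : V) (t : ℕ) (ht : 1 ≤ t) :
    IsGreatest {n : ℤ | ∃ (y : V) (w : G.Walk x y), w.length ≤ t ∧ walkIntGHM X₀ w = n}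
      (ghmNe G X₀ t x : ℤ) := by
  constructor
  · obtain ⟨y, w, hlen, hint⟩ := exists_walk G X₀ t x
    exact ⟨y, w, hlen, hint⟩
  · rintro n ⟨y, w, hlen, rfl⟩
    exact walk_le G X₀ t w hlen
end
end

section
/- Let G=(V,E) be a connected simple graph and (X_t)_{t≥0} the 3-color CCA trajectory of an initial 3-coloring X_0 : V → ℤ/3ℤ. If sup_t ne_t(x) < ∞ holds for some vertex x ∈ V, then it holds for every vertex. Moreover, for all x, y ∈ V one has limsup_{t→∞} ne_t(x)/t = limsup_{t→∞} ne_t(y)/t. -/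
noncomputable section
attribute [local instance] Classical.propDecidable

open Filter

variable {V : Type*}

/-- Unique representative in `{-1,0,1}` of an element of `ℤ/3ℤ`. -/
def ZMod.repInt (a : ZMod 3) : ℤ := if a = 0 then 0 else if a = 1 then 1 else -1

/-- One step of the 3-color cyclic cellular automaton. -/
def ccaStep (G : SimpleGraph V) (X : V → ZMod 3) : V → ZMod 3 :=
  fun v => if ∃ u, G.Adj v u ∧ X u = X v + 1 then X v + 1 else X v

/-- The CCA trajectory started from `X₀`. -/
def ccaTraj (G : SimpleGraph V) (X₀ : V → ZMod 3) : ℕ → V → ZMod 3 :=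
  fun t => (ccaStep G)^[t] X₀

/-- A vertex is excited at time `t` for CCA iff its color advances. -/
def ccaExcited (G : SimpleGraph V) (X₀ : V → ZMod 3) (t : ℕ) (v : V) : Prop :=
  ccaTraj G X₀ (t + 1) v = ccaTraj G X₀ t v + 1

/-- Number of excitations of `x` at times `0, …, t-1` (CCA). -/
def ccaNe (G : SimpleGraph V) (X₀ : V → ZMod 3) (t : ℕ) (x : V) : ℕ :=
  ((Finset.range t).filter fun s => ccaExcited G X₀ s x).card

/-- The CCA 1-form `dX` on ordered pairs of vertices. -/
def dXcca (X : V → ZMod 3) (u v : V) : ℤ := (X v - X u).repInt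

/-- Path integral of the CCA 1-form along a walk. -/
def walkIntCCA {G : SimpleGraph V} (X : V → ZMod 3) {x y : V} (w : G.Walk x y) : ℤ :=
  (w.darts.map fun d => dXcca X d.toProd.1 d.toProd.2).sum


private lemma cca_key1 : ∀ a b : ZMod 3,
    ((b + 1) - (a + 1)).repInt = (b - a).repInt + 1 - 1 := by decide

private lemma cca_key2 : ∀ a b : ZMod 3, b ≠ a + 1 →
    ((b + 1) - a).repInt = (b - a).repInt + 1 - 0 := by decide

private lemma cca_key3 : ∀ a b : ZMod 3, a ≠ b + 1 →
    (b - (a + 1)).repInt = (b - a).repInt + 0 - 1 := by decide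

private lemma repInt_abs_le : ∀ a : ZMod 3, |a.repInt| ≤ 1 := by decide

private lemma ccaExcited_of_neighbor {G : SimpleGraph V} {X₀ : V → ZMod 3} {t : ℕ} {u v : V}
    (h : G.Adj u v) (hc : ccaTraj G X₀ t v = ccaTraj G X₀ t u + 1) :
    ccaExcited G X₀ t u := by
  unfold ccaExcited
  have hstep : ccaTraj G X₀ (t + 1) u = ccaStep G (ccaTraj G X₀ t) u := by
    rw [ccaTraj, Function.iterate_succ_apply']; rfl
  rw [hstep]
  unfold ccaStep
  rw [if_pos ⟨v, h, hc⟩]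

private lemma ccaTraj_succ {G : SimpleGraph V} {X₀ : V → ZMod 3} (t : ℕ) (v : V) :
    ccaTraj G X₀ (t + 1) v = ccaTraj G X₀ t v + if ccaExcited G X₀ t v then 1 else 0 := by
  by_cases h : ccaExcited G X₀ t v
  · rw [if_pos h]; exact h
  · rw [if_neg h, add_zero]
    have hstep : ccaTraj G X₀ (t + 1) v = ccaStep G (ccaTraj G X₀ t) v := by
      rw [ccaTraj, Function.iterate_succ_apply']; rfl
    by_cases hex : ∃ u, G.Adj v u ∧ ccaTraj G X₀ t u = ccaTraj G X₀ t v + 1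
    · exact absurd (show ccaExcited G X₀ t v by
        unfold ccaExcited; rw [hstep]; unfold ccaStep; rw [if_pos hex]) h
    · rw [hstep]; unfold ccaStep; rw [if_neg hex]

private lemma ccaNe_succ {G : SimpleGraph V} {X₀ : V → ZMod 3} (t : ℕ) (v : V) :
    ccaNe G X₀ (t + 1) v = ccaNe G X₀ t v + if ccaExcited G X₀ t v then 1 else 0 := by
  unfold ccaNe
  rw [Finset.range_add_one, Finset.filter_insert]
  by_cases h : ccaExcited G X₀ t v
  · rw [if_pos h, if_pos h, Finset.card_insert_of_notMem (by simp)]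
  · rw [if_neg h, if_neg h, add_zero]

private lemma cca_dX_eq {G : SimpleGraph V} {X₀ : V → ZMod 3} {u v : V} (h : G.Adj u v) :
    ∀ t : ℕ, (ccaTraj G X₀ t v - ccaTraj G X₀ t u).repInt
      = (X₀ v - X₀ u).repInt + (ccaNe G X₀ t v : ℤ) - (ccaNe G X₀ t u : ℤ) := by
  intro t
  induction t with
  | zero => simp [ccaNe, ccaTraj]
  | succ t ih =>
    rw [ccaTraj_succ t v, ccaTraj_succ t u, ccaNe_succ t v, ccaNe_succ t u]
    set a := ccaTraj G X₀ t u with ha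
    set b := ccaTraj G X₀ t v with hb
    have hu' : b = a + 1 → ccaExcited G X₀ t u := fun hc => ccaExcited_of_neighbor h hc
    have hv' : a = b + 1 → ccaExcited G X₀ t v := fun hc => ccaExcited_of_neighbor h.symm hc
    by_cases hU : ccaExcited G X₀ t u <;> by_cases hV : ccaExcited G X₀ t v
    · simp only [if_pos hU, if_pos hV]
      rw [cca_key1 a b]; push_cast; linarith [ih]
    · simp only [if_pos hU, if_neg hV, add_zero]
      have hne : a ≠ b + 1 := fun hc => hV (hv' hc)
      rw [cca_key3 a b hne]; push_cast; linarith [ih]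
    · simp only [if_neg hU, if_pos hV, add_zero]
      have hne : b ≠ a + 1 := fun hc => hU (hu' hc)
      rw [cca_key2 a b hne]; push_cast; linarith [ih]
    · simp only [if_neg hU, if_neg hV, add_zero]
      push_cast; linarith [ih]

private lemma cca_adj_bound {G : SimpleGraph V} {X₀ : V → ZMod 3} {u v : V} (h : G.Adj u v)
    (t : ℕ) : |(ccaNe G X₀ t v : ℤ) - (ccaNe G X₀ t u : ℤ)| ≤ 2 := by
  have h1 := cca_dX_eq (X₀ := X₀) h t
  have h2 := repInt_abs_le (ccaTraj G X₀ t v - ccaTraj G X₀ t u)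
  have h3 := repInt_abs_le (X₀ v - X₀ u)
  have : (ccaNe G X₀ t v : ℤ) - (ccaNe G X₀ t u : ℤ)
      = (ccaTraj G X₀ t v - ccaTraj G X₀ t u).repInt - (X₀ v - X₀ u).repInt := by
    omega
  rw [this]
  calc |(ccaTraj G X₀ t v - ccaTraj G X₀ t u).repInt - (X₀ v - X₀ u).repInt|
      ≤ |(ccaTraj G X₀ t v - ccaTraj G X₀ t u).repInt| + |(X₀ v - X₀ u).repInt| :=
        abs_sub _ _
    _ ≤ 2 := by linarith

private lemma cca_walk_bound {G : SimpleGraph V} {X₀ : V → ZMod 3} :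
    ∀ {x y : V} (w : G.Walk x y) (t : ℕ),
      |(ccaNe G X₀ t y : ℤ) - (ccaNe G X₀ t x : ℤ)| ≤ 2 * w.length := by
  intro x y w
  induction w with
  | nil => intro t; simp
  | @cons x z y h w ih =>
    intro t
    have h1 := cca_adj_bound (X₀ := X₀) h t
    have h2 := ih t
    rw [SimpleGraph.Walk.length_cons]
    have : |(ccaNe G X₀ t y : ℤ) - (ccaNe G X₀ t x : ℤ)|
        ≤ |(ccaNe G X₀ t y : ℤ) - (ccaNe G X₀ t z : ℤ)|
          + |(ccaNe G X₀ t z : ℤ) - (ccaNe G X₀ t x : ℤ)| := abs_sub_le _ _ _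
    push_cast
    linarith

private lemma cca_pair_bound {G : SimpleGraph V} (hconn : G.Connected) (X₀ : V → ZMod 3)
    (x y : V) : ∃ K : ℕ, ∀ t : ℕ, |(ccaNe G X₀ t y : ℤ) - (ccaNe G X₀ t x : ℤ)| ≤ K := by
  obtain ⟨w⟩ := hconn.preconnected x y
  exact ⟨2 * w.length, fun t => by exact_mod_cast cca_walk_bound w t⟩

private lemma ccaNe_le (G : SimpleGraph V) (X₀ : V → ZMod 3) (t : ℕ) (x : V) :
    ccaNe G X₀ t x ≤ t := by
  calc ccaNe G X₀ t x ≤ (Finset.range t).card := Finset.card_filter_le _ _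
    _ = t := Finset.card_range t

private lemma cca_limsup_le {G : SimpleGraph V} (hconn : G.Connected) (X₀ : V → ZMod 3)
    (x y : V) :
    limsup (fun t : ℕ => (ccaNe G X₀ t x : ℝ) / t) atTop ≤
    limsup (fun t : ℕ => (ccaNe G X₀ t y : ℝ) / t) atTop := by
  obtain ⟨K, hK⟩ := cca_pair_bound hconn X₀ y x
  set f : ℕ → ℝ := fun t => (ccaNe G X₀ t x : ℝ) / t with hf
  set g : ℕ → ℝ := fun t => (ccaNe G X₀ t y : ℝ) / t with hg
  have hf0 : ∀ t, 0 ≤ f t := fun t => div_nonneg (Nat.cast_nonneg _) (Nat.cast_nonneg _)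
  have hg0 : ∀ t, 0 ≤ g t := fun t => div_nonneg (Nat.cast_nonneg _) (Nat.cast_nonneg _)
  have hf1 : ∀ t, f t ≤ 1 := by
    intro t
    rcases Nat.eq_zero_or_pos t with h | h
    · simp [hf, h]
    · rw [hf]
      have ht : (0:ℝ) < t := by exact_mod_cast h
      rw [div_le_one ht]
      exact_mod_cast ccaNe_le G X₀ t x
  have hg1 : ∀ t, g t ≤ 1 := by
    intro t
    rcases Nat.eq_zero_or_pos t with h | h
    · simp [hg, h]
    · rw [hg]
      have ht : (0:ℝ) < t := by exact_mod_cast h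
      rw [div_le_one ht]
      exact_mod_cast ccaNe_le G X₀ t y
  have hgb : IsBoundedUnder (· ≤ ·) atTop g := Filter.isBoundedUnder_of ⟨1, hg1⟩
  have hgb' : IsBoundedUnder (· ≥ ·) atTop g := Filter.isBoundedUnder_of ⟨0, hg0⟩
  have hfb' : IsBoundedUnder (· ≥ ·) atTop f := Filter.isBoundedUnder_of ⟨0, hf0⟩
  refine le_of_forall_pos_le_add ?_
  intro ε hε
  have htend : Filter.Tendsto (fun t : ℕ => (K : ℝ) / t) atTop (nhds 0) :=
    tendsto_const_div_atTop_nhds_zero_nat (K : ℝ)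
  have hev1 : ∀ᶠ t : ℕ in atTop, (K : ℝ) / t < ε :=
    (htend.eventually (gt_mem_nhds hε))
  have hev2 : ∀ᶠ t : ℕ in atTop, (1:ℕ) ≤ t := Filter.eventually_ge_atTop 1
  have hev : ∀ᶠ t : ℕ in atTop, f t ≤ g t + ε := by
    filter_upwards [hev1, hev2] with t h1 h2
    have ht : (0:ℝ) < t := by exact_mod_cast h2
    have hle : (ccaNe G X₀ t x : ℝ) ≤ (ccaNe G X₀ t y : ℝ) + K := by
      have habs := abs_le.mp (hK t)
      have : (ccaNe G X₀ t x : ℤ) ≤ (ccaNe G X₀ t y : ℤ) + K := by linarith [habs.2]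
      exact_mod_cast this
    calc f t = (ccaNe G X₀ t x : ℝ) / t := rfl
      _ ≤ ((ccaNe G X₀ t y : ℝ) + K) / t := by
          gcongr
      _ = (ccaNe G X₀ t y : ℝ) / t + (K : ℝ) / t := add_div _ _ _
      _ ≤ g t + ε := add_le_add le_rfl h1.le
  calc limsup f atTop ≤ limsup (fun t => g t + ε) atTop := by
        refine Filter.limsup_le_limsup hev ?_ ?_
        · exact hfb'.isCoboundedUnder_le
        · exact Filter.isBoundedUnder_of ⟨1 + ε, fun t => add_le_add (hg1 t) le_rfl⟩
    _ = limsup g atTop + ε :=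
        limsup_add_const atTop g ε hgb hgb'.isCoboundedUnder_le

/-- If the number of excitations is bounded in time at some vertex, it is bounded at every
vertex; and the limsup of `ne_t(x)/t` is the same for all vertices. -/
theorem cca_boundedness_and_activity_independent_of_vertex (G : SimpleGraph V)
    (hlf : ∀ v : V, (G.neighborSet v).Finite) (hconn : G.Connected)
    (X₀ : V → ZMod 3) :
    ((∃ x : V, ∃ C : ℕ, ∀ t : ℕ, ccaNe G X₀ t x ≤ C) →
      ∀ y : V, ∃ C : ℕ, ∀ t : ℕ, ccaNe G X₀ t y ≤ C) ∧
    (∀ x y : V,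
      limsup (fun t : ℕ => (ccaNe G X₀ t x : ℝ) / t) atTop =
      limsup (fun t : ℕ => (ccaNe G X₀ t y : ℝ) / t) atTop) := by
  constructor
  · rintro ⟨x, C, hC⟩ y
    obtain ⟨K, hK⟩ := cca_pair_bound hconn X₀ x y
    refine ⟨C + K, fun t => ?_⟩
    have h1 := abs_le.mp (hK t)
    have h2 := hC t
    have : (ccaNe G X₀ t y : ℤ) ≤ (C : ℤ) + K := by
      have := h1.2
      have hx : (ccaNe G X₀ t x : ℤ) ≤ C := by exact_mod_cast h2
      linarith
    exact_mod_cast this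
  · intro x y
    exact le_antisymm (cca_limsup_le hconn X₀ x y) (cca_limsup_le hconn X₀ y x)
end
end

section
/- Let T=(V,E) be a (locally finite) tree, (X_t)_{t≥0} the 3-color CCA trajectory of an initial 3-coloring X_0 : V → ℤ/3ℤ, and let y, z ∈ V with P the unique directed path in T from y to z. Then for every t ≥ 0: ∫_P dX_{t+1} − ∫_P dX_t = 1(z is excited at time t) − 1(y is excited at time t). -/
noncomputable section
attribute [local instance] Classical.propDecidable

open Filter

variable {V : Type*}

lemma rep_key (a b : ZMod 3) (eu ev : Prop) [Decidable eu] [Decidable ev]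
    (hu : b = a + 1 → eu) (hv : a = b + 1 → ev) :
    ((if ev then b + 1 else b) - (if eu then a + 1 else a)).repInt - (b - a).repInt =
      (if ev then 1 else 0) - (if eu then 1 else 0) := by
  by_cases heu : eu <;> by_cases hev : ev <;> simp only [heu, hev, if_true, if_false]
  · clear hu hv; revert a b; decide
  · have h1 : a ≠ b + 1 := fun hh => hev (hv hh)
    clear hu hv; revert h1; revert a b; decide
  · have h2 : b ≠ a + 1 := fun hh => heu (hu hh)
    clear hu hv; revert h2; revert a b; decide
  · clear hu hv; revert a b; decide

lemma edge_lemma (G : SimpleGraph V) (X : V → ZMod 3) {u v : V} (h : G.Adj u v) :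
    dXcca (ccaStep G X) u v - dXcca X u v =
      (if ∃ w, G.Adj v w ∧ X w = X v + 1 then 1 else 0) -
      (if ∃ w, G.Adj u w ∧ X w = X u + 1 then 1 else 0) := by
  unfold dXcca ccaStep
  exact rep_key (X u) (X v) _ _ (fun h' => ⟨v, h, h'⟩) (fun h' => ⟨u, h.symm, h'⟩)

lemma walkInt_step (G : SimpleGraph V) (X : V → ZMod 3) :
    ∀ {x y : V} (p : G.Walk x y),
    walkIntCCA (ccaStep G X) p - walkIntCCA X p =
      (if ∃ w, G.Adj y w ∧ X w = X y + 1 then 1 else 0) -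
      (if ∃ w, G.Adj x w ∧ X w = X x + 1 then 1 else 0) := by
  intro x y p
  induction p with
  | nil => simp [walkIntCCA]
  | @cons a b c h q ih =>
    have hstep : walkIntCCA (ccaStep G X) (SimpleGraph.Walk.cons h q)
        - walkIntCCA X (SimpleGraph.Walk.cons h q)
        = (dXcca (ccaStep G X) a b - dXcca X a b)
          + (walkIntCCA (ccaStep G X) q - walkIntCCA X q) := by
      simp only [walkIntCCA, SimpleGraph.Walk.darts_cons, List.map_cons, List.sum_cons]
      ring
    rw [hstep, edge_lemma G X h, ih]
    ring

lemma ccaStep_eq_iff (G : SimpleGraph V) (X : V → ZMod 3) (v : V) :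
    ccaStep G X v = X v + 1 ↔ ∃ w, G.Adj v w ∧ X w = X v + 1 := by
  show (if ∃ u, G.Adj v u ∧ X u = X v + 1 then X v + 1 else X v) = X v + 1 ↔ _
  by_cases h : ∃ u, G.Adj v u ∧ X u = X v + 1
  · rw [if_pos h]; exact iff_of_true rfl h
  · rw [if_neg h]
    exact iff_of_false (fun hh => one_ne_zero (left_eq_add.mp hh)) h

lemma ccaExcited_iff (G : SimpleGraph V) (X₀ : V → ZMod 3) (t : ℕ) (v : V) :
    ccaExcited G X₀ t v ↔ ∃ w, G.Adj v w ∧ ccaTraj G X₀ t w = ccaTraj G X₀ t v + 1 := by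
  have h1 : ccaTraj G X₀ (t + 1) = ccaStep G (ccaTraj G X₀ t) :=
    Function.iterate_succ_apply' (ccaStep G) t X₀
  unfold ccaExcited
  rw [h1]
  exact ccaStep_eq_iff G (ccaTraj G X₀ t) v

/-- On a locally finite tree, for vertices `y, z` with (unique) path `p` from `y` to `z`,
the change of the path integral of `dX_t` over one CCA time step equals
`1(z excited at t) − 1(y excited at t)`. -/
theorem cca_path_integral_flux (G : SimpleGraph V) (htree : G.IsTree)
    (hlf : ∀ v : V, (G.neighborSet v).Finite) (X₀ : V → ZMod 3)
    (y z : V) (p : G.Walk y z) (hp : p.IsPath) (t : ℕ) :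
    walkIntCCA (ccaTraj G X₀ (t + 1)) p - walkIntCCA (ccaTraj G X₀ t) p =
      (if ccaExcited G X₀ t z then 1 else 0) - (if ccaExcited G X₀ t y then 1 else 0) := by
  have h1 : ccaTraj G X₀ (t + 1) = ccaStep G (ccaTraj G X₀ t) := by
    unfold ccaTraj; exact Function.iterate_succ_apply' (ccaStep G) t X₀
  rw [h1, walkInt_step G (ccaTraj G X₀ t) p]
  rw [if_congr (ccaExcited_iff G X₀ t z).symm rfl rfl,
      if_congr (ccaExcited_iff G X₀ t y).symm rfl rfl]
end
end
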